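/- For all real numbers b, c, μ with 0 ≤ b ≤ c and μ ≥ 1, one has (b + c)^μ ≥ c^μ + (2^μ − 1)·b^μ. -/

import Mathlib

theorem weighted_power_ge (b c μ : ℝ) (hb : 0 ≤ b) (hbc : b ≤ c) (hμ : 1 ≤ μ) :
    (b + c) ^ μ ≥ c ^ μ + (2 ^ μ - 1) * b ^ μ := by
  rcases eq_or_lt_of_le hb with rfl | hb0
  · simp [Real.zero_rpow (by linarith : μ ≠ 0)]
  have hcont : Continuous (fun x : ℝ => x ^ μ) :=
    Real.continuous_rpow_const (by linarith)
  have hmono : MonotoneOn (fun t : ℝ => (b + t) ^ μ - t ^ μ) (Set.Icc b c) := by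
    apply monotoneOn_of_deriv_nonneg (convex_Icc b c)
    · exact ((hcont.comp (continuous_const.add continuous_id)).sub hcont).continuousOn
    · intro t ht
      have ht' : t ∈ Set.Ioo b c := by rwa [interior_Icc] at ht
      have htpos : 0 < t := lt_trans hb0 ht'.1
      have h1 : HasDerivAt (fun t : ℝ => (b + t) ^ μ) (μ * (b + t) ^ (μ - 1) * 1) t :=
        (Real.hasDerivAt_rpow_const (p := μ) (x := b + t)
          (Or.inl (by positivity : b + t ≠ 0))).comp t
          (by simpa using (hasDerivAt_id t).const_add b)
      have h2 : HasDerivAt (fun t : ℝ => t ^ μ) (μ * t ^ (μ - 1)) t :=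
        Real.hasDerivAt_rpow_const (Or.inl htpos.ne')
      exact (h1.sub h2).differentiableAt.differentiableWithinAt
    · intro t ht
      have ht' : t ∈ Set.Ioo b c := by rwa [interior_Icc] at ht
      have htpos : 0 < t := lt_trans hb0 ht'.1
      have h1 : HasDerivAt (fun t : ℝ => (b + t) ^ μ) (μ * (b + t) ^ (μ - 1) * 1) t :=
        (Real.hasDerivAt_rpow_const (p := μ) (x := b + t)
          (Or.inl (by positivity : b + t ≠ 0))).comp t
          (by simpa using (hasDerivAt_id t).const_add b)
      have h2 : HasDerivAt (fun t : ℝ => t ^ μ) (μ * t ^ (μ - 1)) t :=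
        Real.hasDerivAt_rpow_const (Or.inl htpos.ne')
      show 0 ≤ deriv ((fun t : ℝ => (b + t) ^ μ) - fun t => t ^ μ) t
      rw [(h1.sub h2).deriv]
      have hle : t ^ (μ - 1) ≤ (b + t) ^ (μ - 1) :=
        Real.rpow_le_rpow htpos.le (by linarith) (by linarith)
      nlinarith [hle, (by linarith : (0:ℝ) < μ)]
  have key := hmono (Set.left_mem_Icc.mpr hbc) (Set.right_mem_Icc.mpr hbc) hbc
  simp only at key
  have hbb : b + b = 2 * b := by ring
  rw [hbb, Real.mul_rpow (by norm_num) hb] at key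
  linarith
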